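/- Let A ∈ 𝒫_π be a canonical plane matrix of type π, and for i ∈ {1,...,m_1} let V_i = ℂ[A]·e_i be the A-cyclic subspace of ℂ^n generated by the standard basis vector e_i. Set m_{t+1} = 0, s_j = l_1 + ... + l_j, and P_j = {m_1 − m_j + 1, ..., m_1 − m_{j+1}} for j = 1,...,t. Then for every j ∈ {1,...,t} and every i ∈ P_j, dim V_i = s_j. -/

import Mathlib

/- Common setup: canonical plane matrices (P. Daugulis, "A parametrization of
matrix conjugacy orbit sets as unions of affine planes"). -/

open Matrix Polynomial

noncomputable section

/-- `ℕ`-indexed entries of the generalized companion matrix `R_l(y₁,...,y_l)`: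
subdiagonal entries `1`, last column given (via Vieta) by the coefficients of
`∏ (X - yᵢ)` (entry in row `k` of the last column is
`(−1)^{l+1−k}·e_{l+1−k}(y)`), all other entries `0`. -/
def genCompE (l : ℕ) (y : Fin l → ℂ) (i j : ℕ) : ℂ :=
  if i < l ∧ j < l then
    (if i = j + 1 then 1
     else if j = l - 1 then -((∏ k, (X - C (y k))).coeff i)
     else 0)
  else 0

/-- The generalized companion matrix `R_l(y₁,...,y_l)`, i.e. the companion
matrix of `∏ (X - yᵢ)`. -/
def genComp (l : ℕ) (y : Fin l → ℂ) : Matrix (Fin l) (Fin l) ℂ :=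
  Matrix.of fun i j => genCompE l y i j

/-- A partition of `n`, recorded by its stacks: `t` stacks, with strictly
decreasing positive distinct values `m 0 > m 1 > ... > m (t-1)` and positive
lengths `l j`, so that the partition consists of `l j` copies of `m j` and
`n = ∑ j, l j * m j`. -/
structure StackPartition (n : ℕ) where
  t : ℕ
  m : Fin t → ℕ
  l : Fin t → ℕ
  m_pos : ∀ j, 0 < m j
  l_pos : ∀ j, 0 < l j
  m_strictAnti : ∀ i j : Fin t, i < j → m j < m i
  sum_eq : (∑ j, l j * m j) = n

namespace StackPartition

variable {n : ℕ} (P : StackPartition n)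

/-- `m j` extended by `0` beyond the number of stacks (`0`-indexed), so
`mE 0 = m_1` and `mE t = m_{t+1} = 0` in the paper's notation. -/
def mE (j : ℕ) : ℕ := if h : j < P.t then P.m ⟨j, h⟩ else 0

/-- Row/column offset of the `j`-th diagonal block (`0`-indexed):
`S j = ∑_{i<j} l i * m i`. -/
def S (j : ℕ) : ℕ := ∑ i : Fin P.t, if (i : ℕ) < j then P.l i * P.m i else 0

/-- `sE j = ∑_{i<j} l i`; the paper's `s_j` (for `1`-indexed `j`) is `sE j`. -/
def sE (j : ℕ) : ℕ := ∑ i : Fin P.t, if (i : ℕ) < j then P.l i else 0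

/-- The multiset of addends of the partition. -/
def parts : Multiset ℕ := ∑ j : Fin P.t, Multiset.replicate (P.l j) (P.m j)

/-- Offsets for the direct sum `⊕_j (m_j - m_{j+1}) G_j`. -/
def T (k : ℕ) : ℕ :=
  ∑ i : Fin P.t, if (i : ℕ) < k then (P.m i - P.mE ((i : ℕ) + 1)) * P.sE ((i : ℕ) + 1) else 0

end StackPartition

/-- Parameters `λ_{j,1},...,λ_{j,l_j}` for each stack `j`. -/
def Params {n : ℕ} (P : StackPartition n) := (j : Fin P.t) → Fin (P.l j) → ℂ

/-- `ℕ`-indexed entry of the canonical plane matrix of type `P` with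
parameters `lam`: the `j`-th diagonal block (of size `l j * m j`, occupying
rows and columns `[S j, S (j+1))`) is `R_{l j}(lam j) ⊗ E_{m j}` (row index
`a` of the block encodes the pair `(a / m j, a % m j)`), the block directly
below it occupies the first `m (j+1)` rows of block `j+1` and the last `m j`
columns of block `j` and equals `[O | E_{m (j+1)}]`, and all other entries
vanish. -/
def cpmEntry {n : ℕ} (P : StackPartition n) (lam : Params P) (r c : ℕ) : ℂ :=
  (∑ j : Fin P.t,
    if P.S j ≤ r ∧ r < P.S ((j : ℕ) + 1) ∧ P.S j ≤ c ∧ c < P.S ((j : ℕ) + 1)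
        ∧ (r - P.S j) % P.m j = (c - P.S j) % P.m j then
      genCompE (P.l j) (lam j) ((r - P.S j) / P.m j) ((c - P.S j) / P.m j)
    else 0)
  +
  (∑ j : Fin P.t,
    if P.S ((j : ℕ) + 1) ≤ r ∧ r < P.S ((j : ℕ) + 1) + P.mE ((j : ℕ) + 1)
        ∧ P.S ((j : ℕ) + 1) - P.m j ≤ c ∧ c < P.S ((j : ℕ) + 1)
        ∧ c - (P.S ((j : ℕ) + 1) - P.m j)
            = (P.m j - P.mE ((j : ℕ) + 1)) + (r - P.S ((j : ℕ) + 1)) then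
      (1 : ℂ)
    else 0)

/-- The canonical plane matrix of type `P` with parameters `lam`. -/
def cpm {n : ℕ} (P : StackPartition n) (lam : Params P) : Matrix (Fin n) (Fin n) ℂ :=
  Matrix.of fun r c => cpmEntry P lam r c

/-- The set `𝒫_π` of canonical plane matrices of type `P`. -/
def planeSet {n : ℕ} (P : StackPartition n) : Set (Matrix (Fin n) (Fin n) ℂ) :=
  { A | ∃ lam : Params P, A = cpm P lam }

/-- Similarity (conjugacy) of square complex matrices. -/
def MatrixSimilar {n : ℕ} (A B : Matrix (Fin n) (Fin n) ℂ) : Prop :=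
  ∃ Q : Matrix (Fin n) (Fin n) ℂ, IsUnit Q.det ∧ A * Q = Q * B

/-- The `A`-cyclic subspace `ℂ[A]·v`, spanned by `v, Av, A²v, ...`. -/
def cyclicSpan {n : ℕ} (A : Matrix (Fin n) (Fin n) ℂ) (v : Fin n → ℂ) :
    Submodule ℂ (Fin n → ℂ) :=
  Submodule.span ℂ (Set.range fun k : ℕ => (A ^ k) *ᵥ v)

/-- `ℕ`-indexed entry of the matrix
`G_j = ⊕_{i≤j} C(a_{i,0},...,a_{i,l_i−1}) + Σ_{i<j} E_{s_i+1,s_i}`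
(`0`-indexed `j`; the `i`-th diagonal block is the companion matrix of
`∏_k (X - λ_{i,k})`, and the matrix units sit just below the lower-left
corners of the diagonal blocks). -/
def GEntry {n : ℕ} (P : StackPartition n) (lam : Params P) (j r c : ℕ) : ℂ :=
  (∑ i : Fin P.t,
    if (i : ℕ) ≤ j ∧ P.sE i ≤ r ∧ r < P.sE ((i : ℕ) + 1)
        ∧ P.sE i ≤ c ∧ c < P.sE ((i : ℕ) + 1) then
      genCompE (P.l i) (lam i) (r - P.sE i) (c - P.sE i)
    else 0)
  +
  (∑ i : Fin P.t,
    if 1 ≤ (i : ℕ) ∧ (i : ℕ) ≤ j ∧ r = P.sE i ∧ c + 1 = P.sE i then (1 : ℂ) else 0)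

/-- The `s_j × s_j` matrix `G_j` (`0`-indexed `j`, of size `sE (j+1)`). -/
def Gm {n : ℕ} (P : StackPartition n) (lam : Params P) (j : Fin P.t) :
    Matrix (Fin (P.sE ((j : ℕ) + 1))) (Fin (P.sE ((j : ℕ) + 1))) ℂ :=
  Matrix.of fun r c => GEntry P lam j r c

/-- The multiset `[λ_{j,1},...,λ_{j,l_j}]` of stack `j`. -/
def stackMultiset {n : ℕ} (P : StackPartition n) (lam : Params P) (j : Fin P.t) :
    Multiset ℂ :=
  Multiset.map (lam j) Finset.univ.val

/-- `μ(z, j)`: multiplicity of `z` in the multiset `[λ_{j,1},...,λ_{j,l_j}]`. -/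
def mu {n : ℕ} (P : StackPartition n) (lam : Params P) (z : ℂ) (j : Fin P.t) : ℕ :=
  (stackMultiset P lam j).count z

/-- The multiset of all parameters of stacks `0,...,j` (`0`-indexed), so
`α(z, j) = (lamUpTo P lam j).count z`. -/
def lamUpTo {n : ℕ} (P : StackPartition n) (lam : Params P) (j : ℕ) : Multiset ℂ :=
  ∑ i : Fin P.t, if (i : ℕ) ≤ j then stackMultiset P lam i else 0

/-- Index type for the direct sum of one Jordan block per distinct element of a
multiset `s`, the block for `z` having size `s.count z`. -/
abbrev JordanIdx (s : Multiset ℂ) : Type := Σ z : s.toFinset, Fin (s.count z.val)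

/-- The direct sum `⊕_z J_{s.count z}(z)` over the distinct elements `z` of the
multiset `s` (lower Jordan blocks: eigenvalue on the diagonal, ones on the
subdiagonal). -/
def jordanOfMultiset (s : Multiset ℂ) : Matrix (JordanIdx s) (JordanIdx s) ℂ :=
  Matrix.of fun x y =>
    if x.1 = y.1 then
      (if (x.2 : ℕ) = (y.2 : ℕ) then x.1.val
       else if (x.2 : ℕ) = (y.2 : ℕ) + 1 then 1 else 0)
    else 0

/-- `0`-indexed Weyr characteristic: `weyr B z i = ω_{i+1}` where
`ω_k = dim ker (B - zI)^k − dim ker (B - zI)^{k-1}`. -/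
def weyr {n : ℕ} (B : Matrix (Fin n) (Fin n) ℂ) (z : ℂ) (i : ℕ) : ℕ :=
  Module.finrank ℂ (LinearMap.ker ((B - z • 1).mulVecLin ^ (i + 1)))
    - Module.finrank ℂ (LinearMap.ker ((B - z • 1).mulVecLin ^ i))

/-- `ℕ`-indexed entry of the block diagonal matrix `⊕_j (m_j - m_{j+1}) G_j`
(for each `j`, exactly `m j - m (j+1)` consecutive copies of `G_j`). -/
def dsEntry {n : ℕ} (P : StackPartition n) (lam : Params P) (r c : ℕ) : ℂ :=
  ∑ j : Fin P.t,
    if P.T j ≤ r ∧ r < P.T ((j : ℕ) + 1) ∧ P.T j ≤ c ∧ c < P.T ((j : ℕ) + 1)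
        ∧ (r - P.T j) / P.sE ((j : ℕ) + 1) = (c - P.T j) / P.sE ((j : ℕ) + 1) then
      GEntry P lam j ((r - P.T j) % P.sE ((j : ℕ) + 1)) ((c - P.T j) % P.sE ((j : ℕ) + 1))
    else 0

/-- Index type for `⊕_{j=1}^{t} (m_j - m_{j+1}) (⊕_z J_{α(z,j)}(z))`. -/
abbrev FullJordanIdx {n : ℕ} (P : StackPartition n) (lam : Params P) : Type :=
  Σ j : Fin P.t, Fin (P.m j - P.mE ((j : ℕ) + 1)) × JordanIdx (lamUpTo P lam (j : ℕ))

/-- The matrix `⊕_{j=1}^{t} (m_j - m_{j+1}) (⊕_z J_{α(z,j)}(z))`: for each `j`,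
`m j - m (j+1)` copies of the direct sum, over the distinct `z` with
`α(z,j) = μ(z,1) + ... + μ(z,j) > 0`, of the Jordan blocks `J_{α(z,j)}(z)`. -/
def fullJordan {n : ℕ} (P : StackPartition n) (lam : Params P) :
    Matrix (FullJordanIdx P lam) (FullJordanIdx P lam) ℂ :=
  Matrix.of fun x y =>
    if h : x.1 = y.1 then
      (fun y2 : Fin (P.m x.1 - P.mE ((x.1 : ℕ) + 1)) × JordanIdx (lamUpTo P lam (x.1 : ℕ)) =>
        if x.2.1 = y2.1 then jordanOfMultiset (lamUpTo P lam (x.1 : ℕ)) x.2.2 y2.2 else 0)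
      (cast (congrArg (fun j : Fin P.t =>
        Fin (P.m j - P.mE ((j : ℕ) + 1)) × JordanIdx (lamUpTo P lam (j : ℕ))) h.symm) y.2)
    else 0

end
section Aux
open Matrix Polynomial
variable {n : ℕ} (P : StackPartition n)

lemma sum_ite_succ {M : Type*} [AddCommMonoid M] (f : Fin P.t → M) (b : Fin P.t) :
    (∑ i : Fin P.t, if (i:ℕ) < (b:ℕ)+1 then f i else 0)
      = (∑ i : Fin P.t, if (i:ℕ) < (b:ℕ) then f i else 0) + f b := by
  have key : ∀ i : Fin P.t, (if (i:ℕ) < (b:ℕ)+1 then f i else 0)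
      = (if (i:ℕ) < (b:ℕ) then f i else 0) + (if i = b then f i else 0) := by
    intro i
    rcases lt_trichotomy (i:ℕ) (b:ℕ) with h | h | h
    · rw [if_pos (by omega), if_pos h, if_neg (by simp [Fin.ext_iff]; omega), add_zero]
    · rw [if_pos (by omega), if_neg (by omega), if_pos (by simp [Fin.ext_iff, h]), zero_add]
    · rw [if_neg (by omega), if_neg (by omega), if_neg (by simp [Fin.ext_iff]; omega), add_zero]
  rw [Finset.sum_congr rfl (fun i _ => key i), Finset.sum_add_distrib,
    Finset.sum_ite_eq' Finset.univ b f]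
  simp

lemma S_succ (b : Fin P.t) : P.S ((b:ℕ)+1) = P.S b + P.l b * P.m b :=
  sum_ite_succ P _ b

lemma S_mono {k k' : ℕ} (h : k ≤ k') : P.S k ≤ P.S k' := by
  apply Finset.sum_le_sum
  intro c _
  by_cases hc : (c:ℕ) < k
  · simp [hc, (by omega : (c:ℕ) < k')]
  · simp [hc]

lemma S_last : P.S P.t = n := by
  have : P.S P.t = ∑ c : Fin P.t, P.l c * P.m c :=
    Finset.sum_congr rfl (fun c _ => by simp [c.isLt])
  rw [this, P.sum_eq]

lemma S_succ_le (b : Fin P.t) : P.S ((b:ℕ)+1) ≤ n :=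
  (S_mono P b.isLt).trans (le_of_eq (S_last P))

lemma sE_succ (b : Fin P.t) : P.sE ((b:ℕ)+1) = P.sE b + P.l b :=
  sum_ite_succ P _ b

/-- block membership determines the block -/
lemma block_eq {c : ℕ} {b1 b2 : Fin P.t} (h1 : P.S b1 ≤ c) (h2 : c < P.S ((b1:ℕ)+1))
    (h3 : P.S b2 ≤ c) (h4 : c < P.S ((b2:ℕ)+1)) : b1 = b2 := by
  rcases lt_trichotomy b1 b2 with h | h | h
  · exact absurd ((h2.trans_le (S_mono P (by exact_mod_cast h))).trans_le h3) (lt_irrefl c).elim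
  · exact h
  · exact absurd ((h4.trans_le (S_mono P (by exact_mod_cast h))).trans_le h1) (lt_irrefl c).elim

end Aux
section Aux2
open Matrix Polynomial
variable {n : ℕ} (P : StackPartition n) (i : Fin n)

/-- offset within a stack value -/
def oi (b : Fin P.t) : ℕ := (i:ℕ) - (P.mE 0 - P.m b)

/-- the index of the `a`-th generator inside stack `b` -/
def ii (b : Fin P.t) (a : ℕ) : ℕ := P.S b + (a * P.m b + oi P i b)

lemma mE_zero (ht : 0 < P.t) : P.mE 0 = P.m ⟨0, ht⟩ := dif_pos ht

lemma m_anti {b b' : Fin P.t} (h : b ≤ b') : P.m b' ≤ P.m b := by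
  rcases eq_or_lt_of_le h with h | h
  · exact le_of_eq (congrArg P.m h.symm)
  · exact le_of_lt (P.m_strictAnti _ _ h)

lemma m_le_mE0 (b : Fin P.t) : P.m b ≤ P.mE 0 := by
  rw [mE_zero P b.pos]
  exact m_anti P (by simp [Fin.le_def])

lemma mE_succ_le (b : Fin P.t) : P.mE ((b:ℕ)+1) ≤ P.m b := by
  unfold StackPartition.mE
  split
  · exact le_of_lt (P.m_strictAnti b _ (by simp [Fin.lt_def]))
  · exact Nat.zero_le _

variable {j : Fin P.t}
    (h1 : P.mE 0 - P.m j ≤ (i : ℕ)) (h2 : (i : ℕ) < P.mE 0 - P.mE ((j : ℕ) + 1))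

include h1 in
lemma hble {b : Fin P.t} (hb : b ≤ j) : P.mE 0 - P.m b ≤ (i:ℕ) := by
  have := m_anti P hb
  omega

include h2 in
lemma i_lt_mE0 : (i:ℕ) < P.mE 0 := lt_of_lt_of_le h2 (Nat.sub_le _ _)

include h1 h2 in
lemma oi_add {b : Fin P.t} (hb : b ≤ j) : oi P i b + P.mE 0 = (i:ℕ) + P.m b := by
  have := hble P i h1 hb
  have := m_le_mE0 P b
  have := i_lt_mE0 P i h2
  unfold oi; omega

include h1 h2 in
lemma oi_lt {b : Fin P.t} (hb : b ≤ j) : oi P i b < P.m b := by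
  have := oi_add P i h1 h2 hb
  have := i_lt_mE0 P i h2
  omega

include h1 h2 in
lemma oi_j_lt : oi P i j < P.m j - P.mE ((j:ℕ)+1) := by
  have := oi_add P i h1 h2 (le_refl j)
  have := mE_succ_le P j
  have := m_le_mE0 P j
  omega

include h1 h2 in
lemma ii_lt_S {b : Fin P.t} (hb : b ≤ j) {a : ℕ} (ha : a < P.l b) :
    ii P i b a < P.S ((b:ℕ)+1) := by
  rw [S_succ, ii]
  have h3 := oi_lt P i h1 h2 hb
  have : a * P.m b + oi P i b < (a+1) * P.m b := by
    rw [add_mul, one_mul]; omega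
  have : (a+1) * P.m b ≤ P.l b * P.m b := Nat.mul_le_mul_right _ (by omega)
  omega

include h1 h2 in
lemma ii_lt_n {b : Fin P.t} (hb : b ≤ j) {a : ℕ} (ha : a < P.l b) :
    ii P i b a < n :=
  lt_of_lt_of_le (ii_lt_S P i h1 h2 hb ha) (S_succ_le P b)

lemma ii_mod {b : Fin P.t} (hlt : oi P i b < P.m b) (a : ℕ) :
    (ii P i b a - P.S b) % P.m b = oi P i b := by
  rw [ii, Nat.add_sub_cancel_left, mul_comm, Nat.mul_add_mod, Nat.mod_eq_of_lt hlt]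

lemma ii_div {b : Fin P.t} (hlt : oi P i b < P.m b) (a : ℕ) :
    (ii P i b a - P.S b) / P.m b = a := by
  rw [ii, Nat.add_sub_cancel_left, mul_comm,
    Nat.mul_add_div (P.m_pos b), Nat.div_eq_of_lt hlt, add_zero]

omit h1 h2 in
/-- a row in block `b` with residue `oi` is an `ii` index -/
lemma row_rec {b : Fin P.t} {r : ℕ} (hr1 : P.S b ≤ r)
    (hr2 : r < P.S ((b:ℕ)+1)) (hmod : (r - P.S b) % P.m b = oi P i b) :
    r = ii P i b ((r - P.S b) / P.m b) ∧ (r - P.S b) / P.m b < P.l b := by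
  have hm := P.m_pos b
  have hdm := Nat.div_add_mod (r - P.S b) (P.m b)
  have e2 : (r - P.S b) / P.m b * P.m b = P.m b * ((r - P.S b) / P.m b) :=
    mul_comm _ _
  constructor
  · rw [ii, ← hmod]; omega
  · have h5 : r - P.S b < P.l b * P.m b := by rw [S_succ] at hr2; omega
    rw [Nat.div_lt_iff_lt_mul hm]; omega

/-- injectivity of ii in `a` -/
lemma ii_inj {b : Fin P.t} (hlt : oi P i b < P.m b) {a a' : ℕ}
    (h : ii P i b a = ii P i b a') : a = a' := by
  rw [← ii_div P i hlt (b := b) a, ← ii_div P i hlt (b := b) a', h]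

end Aux2
section Aux3
open Matrix Polynomial
variable {n : ℕ} (P : StackPartition n) (lam : Params P) (i : Fin n) {j : Fin P.t}
    (h1 : P.mE 0 - P.m j ≤ (i : ℕ)) (h2 : (i : ℕ) < P.mE 0 - P.mE ((j : ℕ) + 1))

include h1 h2 in
lemma cpmEntry_ii {b : Fin P.t} (hb : b ≤ j) {a : ℕ} (ha : a < P.l b) (r : ℕ) :
    cpmEntry P lam r (ii P i b a)
      = (if P.S b ≤ r ∧ r < P.S ((b:ℕ)+1) ∧ (r - P.S b) % P.m b = oi P i b then
           genCompE (P.l b) (lam b) ((r - P.S b) / P.m b) a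
         else 0)
      + (if a + 1 = P.l b ∧ P.S ((b:ℕ)+1) ≤ r ∧ r < P.S ((b:ℕ)+1) + P.mE ((b:ℕ)+1)
            ∧ oi P i b = (P.m b - P.mE ((b:ℕ)+1)) + (r - P.S ((b:ℕ)+1)) then 1 else 0) := by
  have hoi : oi P i b < P.m b := oi_lt P i h1 h2 hb
  have hc1 : P.S b ≤ ii P i b a := Nat.le_add_right _ _
  have hc2 : ii P i b a < P.S ((b:ℕ)+1) := ii_lt_S P i h1 h2 hb ha
  rw [cpmEntry]
  congr 1
  · rw [Finset.sum_eq_single b]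
    · rw [ii_mod P i hoi, ii_div P i hoi]
      congr 1
      simp only [eq_iff_iff]
      constructor
      · rintro ⟨x1, x2, _, _, x5⟩; exact ⟨x1, x2, x5⟩
      · rintro ⟨x1, x2, x5⟩; exact ⟨x1, x2, hc1, hc2, x5⟩
    · intro b' _ hb'
      rw [if_neg]
      rintro ⟨_, _, y3, y4, _⟩
      exact hb' (block_eq P y3 y4 hc1 hc2)
    · intro h; exact absurd (Finset.mem_univ b) h
  · rw [Finset.sum_eq_single b]
    · have f1 : P.S ((b:ℕ)+1) = P.S b + P.l b * P.m b := S_succ P b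
      have f2 : ii P i b a = P.S b + (a * P.m b + oi P i b) := rfl
      have f5 : a + 1 = P.l b → a * P.m b + P.m b = P.l b * P.m b := by
        intro h; rw [← h]; ring
      have f6 : a + 1 < P.l b → a * P.m b + P.m b + P.m b ≤ P.l b * P.m b := by
        intro h
        calc a * P.m b + P.m b + P.m b = (a + 2) * P.m b := by ring
        _ ≤ P.l b * P.m b := Nat.mul_le_mul_right _ (by omega)
      have hm := P.m_pos b
      congr 1
      simp only [eq_iff_iff]
      constructor
      · rintro ⟨y1, y2, y3, y4, y5⟩
        have hla : a + 1 = P.l b := by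
          rcases Nat.lt_or_ge (a+1) (P.l b) with h | h
          · exfalso; have := f6 h; omega
          · omega
        have := f5 hla
        refine ⟨hla, y1, y2, ?_⟩
        omega
      · rintro ⟨y0, y1, y2, y3⟩
        have := f5 y0
        refine ⟨y1, y2, by omega, hc2, by omega⟩
    · intro b' _ hb'
      rw [if_neg]
      rintro ⟨_, _, y3, y4, _⟩
      have hS : P.S b' ≤ P.S ((b':ℕ)+1) - P.m b' := by
        have := S_succ P b'
        have : P.m b' ≤ P.l b' * P.m b' :=
          Nat.le_mul_of_pos_left _ (P.l_pos b')
        omega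
      exact hb' (block_eq P (le_trans hS y3) y4 hc1 hc2)
    · intro h; exact absurd (Finset.mem_univ b) h

end Aux3
section Aux4
open Matrix Polynomial

/-- standard basis vector, ℕ-indexed -/
def eV {n : ℕ} (c : ℕ) (h : c < n) : Fin n → ℂ := Pi.single ⟨c, h⟩ 1

lemma eV_apply {n : ℕ} (c : ℕ) (h : c < n) (r : Fin n) :
    eV c h r = if (r:ℕ) = c then 1 else 0 := by
  rw [eV, Pi.single_apply]
  congr 1
  simp [Fin.ext_iff]

lemma mulVec_eV {n : ℕ} (A : Matrix (Fin n) (Fin n) ℂ) (c : ℕ) (h : c < n) (r : Fin n) :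
    (A *ᵥ eV c h) r = A r ⟨c, h⟩ := by
  simp [eV, Matrix.mulVec, dotProduct, Pi.single_apply, mul_ite]

variable {n : ℕ} (P : StackPartition n) (lam : Params P) (i : Fin n) {j : Fin P.t}
    (h1 : P.mE 0 - P.m j ≤ (i : ℕ)) (h2 : (i : ℕ) < P.mE 0 - P.mE ((j : ℕ) + 1))

include h1 h2 in
lemma step_mid {b : Fin P.t} (hb : b ≤ j) {a : ℕ} (ha : a + 1 < P.l b) :
    cpm P lam *ᵥ eV (ii P i b a) (ii_lt_n P i h1 h2 hb (by omega))
      = eV (ii P i b (a+1)) (ii_lt_n P i h1 h2 hb ha) := by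
  have hoi : oi P i b < P.m b := oi_lt P i h1 h2 hb
  funext r
  rw [mulVec_eV, eV_apply]
  show cpmEntry P lam r (ii P i b a) = _
  rw [cpmEntry_ii P lam i h1 h2 hb (by omega) r]
  have hT2 : (if a + 1 = P.l b ∧ P.S ((b:ℕ)+1) ≤ (r:ℕ) ∧ (r:ℕ) < P.S ((b:ℕ)+1) + P.mE ((b:ℕ)+1)
      ∧ oi P i b = (P.m b - P.mE ((b:ℕ)+1)) + ((r:ℕ) - P.S ((b:ℕ)+1)) then (1:ℂ) else 0) = 0 :=
    if_neg (by rintro ⟨y0, -⟩; omega)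
  rw [hT2, add_zero]
  by_cases hcond : P.S b ≤ (r:ℕ) ∧ (r:ℕ) < P.S ((b:ℕ)+1)
      ∧ ((r:ℕ) - P.S b) % P.m b = oi P i b
  · rw [if_pos hcond]
    obtain ⟨hr1, hr2, hr3⟩ := hcond
    obtain ⟨hre, hqlt⟩ := row_rec P i hr1 hr2 hr3
    rw [genCompE, if_pos ⟨hqlt, by omega⟩]
    by_cases hqa : ((r:ℕ) - P.S b) / P.m b = a + 1
    · rw [if_pos hqa, if_pos (by rw [hre, hqa])]
    · rw [if_neg hqa, if_neg (show ¬ a = P.l b - 1 by omega), if_neg]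
      intro hc
      exact hqa (ii_inj P i hoi (hre ▸ hc))
  · rw [if_neg hcond, if_neg]
    intro hc
    exact hcond ⟨hc ▸ Nat.le_add_right _ _, hc ▸ ii_lt_S P i h1 h2 hb ha,
      hc ▸ ii_mod P i hoi _⟩

include h1 h2 in
lemma lastcol_sum {b : Fin P.t} (hb : b ≤ j) {a : ℕ} (ha : a + 1 = P.l b) (r : Fin n) :
    (if P.S b ≤ (r:ℕ) ∧ (r:ℕ) < P.S ((b:ℕ)+1) ∧ ((r:ℕ) - P.S b) % P.m b = oi P i b then
        genCompE (P.l b) (lam b) (((r:ℕ) - P.S b) / P.m b) a else 0)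
      = (∑ q : Fin (P.l b), (-(∏ k, (X - C (lam b k))).coeff (q:ℕ)) •
          eV (n := n) (ii P i b (q:ℕ)) (ii_lt_n P i h1 h2 hb q.isLt)) r := by
  have hoi : oi P i b < P.m b := oi_lt P i h1 h2 hb
  rw [Finset.sum_apply]
  simp only [Pi.smul_apply, eV_apply, smul_eq_mul]
  by_cases hcond : P.S b ≤ (r:ℕ) ∧ (r:ℕ) < P.S ((b:ℕ)+1)
      ∧ ((r:ℕ) - P.S b) % P.m b = oi P i b
  · rw [if_pos hcond]
    obtain ⟨hr1, hr2, hr3⟩ := hcond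
    obtain ⟨hre, hqlt⟩ := row_rec P i hr1 hr2 hr3
    rw [genCompE, if_pos ⟨hqlt, by omega⟩,
      if_neg (show ¬ ((r:ℕ) - P.S b) / P.m b = a + 1 by omega),
      if_pos (show a = P.l b - 1 by omega)]
    rw [Finset.sum_eq_single (⟨((r:ℕ) - P.S b) / P.m b, hqlt⟩ : Fin (P.l b))]
    · rw [if_pos hre, mul_one]
    · intro q _ hq
      rw [if_neg, mul_zero]
      intro hc
      exact hq (Fin.ext (ii_inj P i hoi (hre ▸ hc)).symm)
    · intro h; exact absurd (Finset.mem_univ _) h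
  · rw [if_neg hcond]
    symm
    apply Finset.sum_eq_zero
    intro q _
    rw [if_neg, mul_zero]
    intro hc
    exact hcond ⟨hc ▸ Nat.le_add_right _ _, hc ▸ ii_lt_S P i h1 h2 hb q.isLt,
      hc ▸ ii_mod P i hoi _⟩

include h1 h2 in
lemma step_last_j {a : ℕ} (ha : a + 1 = P.l j) :
    cpm P lam *ᵥ eV (ii P i j a) (ii_lt_n P i h1 h2 le_rfl (by omega))
      = ∑ q : Fin (P.l j), (-(∏ k, (X - C (lam j k))).coeff (q:ℕ)) •
          eV (ii P i j (q:ℕ)) (ii_lt_n P i h1 h2 le_rfl q.isLt) := by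
  funext r
  rw [mulVec_eV]
  show cpmEntry P lam r (ii P i j a) = _
  rw [cpmEntry_ii P lam i h1 h2 le_rfl (by omega) r]
  have hlt := oi_j_lt P i h1 h2
  have hT2 : (if a + 1 = P.l j ∧ P.S ((j:ℕ)+1) ≤ (r:ℕ) ∧ (r:ℕ) < P.S ((j:ℕ)+1) + P.mE ((j:ℕ)+1)
      ∧ oi P i j = (P.m j - P.mE ((j:ℕ)+1)) + ((r:ℕ) - P.S ((j:ℕ)+1)) then (1:ℂ) else 0) = 0 :=
    if_neg (by rintro ⟨-, -, -, y⟩; omega)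
  rw [hT2, add_zero]
  exact lastcol_sum P lam i h1 h2 le_rfl ha r

include h1 h2 in
lemma step_last_mid {b b' : Fin P.t} (hb' : (b':ℕ) = (b:ℕ)+1) (hbj : b' ≤ j)
    (hbble : b ≤ j) {a : ℕ} (ha : a + 1 = P.l b) :
    cpm P lam *ᵥ eV (ii P i b a) (ii_lt_n P i h1 h2 hbble (by omega))
      = (∑ q : Fin (P.l b), (-(∏ k, (X - C (lam b k))).coeff (q:ℕ)) •
          eV (n := n) (ii P i b (q:ℕ)) (ii_lt_n P i h1 h2 hbble q.isLt))
        + eV (ii P i b' 0) (ii_lt_n P i h1 h2 hbj (P.l_pos b')) := by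
  funext r
  rw [mulVec_eV]
  show cpmEntry P lam r (ii P i b a) = _
  rw [cpmEntry_ii P lam i h1 h2 hbble (by omega) r, Pi.add_apply]
  congr 1
  · exact lastcol_sum P lam i h1 h2 hbble ha r
  · have hmE : P.mE ((b:ℕ)+1) = P.m b' := by
      rw [StackPartition.mE, dif_pos (hb' ▸ b'.isLt)]
      congr 1
      exact Fin.ext hb'.symm
    have hS' : P.S (b':ℕ) = P.S ((b:ℕ)+1) := by rw [hb']
    have hmm : P.m b' ≤ P.m b := m_anti P (by rw [Fin.le_def]; omega)
    have ho1 := oi_add P i h1 h2 hbble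
    have ho2 := oi_add P i h1 h2 hbj
    have ho3 : oi P i b' < P.m b' := oi_lt P i h1 h2 hbj
    have hii0 : ii P i b' 0 = P.S ((b:ℕ)+1) + oi P i b' := by
      simp [ii, hS']
    rw [eV_apply]
    rw [hmE]
    congr 1
    simp only [eq_iff_iff]
    constructor
    · rintro ⟨-, y1, y2, y3⟩; omega
    · intro y; refine ⟨ha, by omega, by omega, by omega⟩

end Aux4
section Aux5
open Matrix Polynomial

variable {n : ℕ} (P : StackPartition n)

lemma sE_card : ∀ (k : ℕ) (hk : k ≤ P.t), P.sE k = ∑ b : Fin k, P.l (Fin.castLE hk b)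
  | 0, hk => by simp [StackPartition.sE]
  | (k+1), hk => by
      rw [Fin.sum_univ_castSucc, show P.sE (k+1) = P.sE k + P.l ⟨k, hk⟩ from
        sE_succ P ⟨k, hk⟩, sE_card k (by omega)]
      congr 1

lemma S_zero : P.S 0 = 0 := by simp [StackPartition.S]

variable (lam : Params P) (i : Fin n) {j : Fin P.t}
    (h1 : P.mE 0 - P.m j ≤ (i : ℕ)) (h2 : (i : ℕ) < P.mE 0 - P.mE ((j : ℕ) + 1))

/-- embedding of the first `j+1` stacks -/
def emb (j : Fin P.t) : Fin ((j:ℕ)+1) → Fin P.t := Fin.castLE j.isLt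

omit h1 h2 in
lemma emb_le (b : Fin ((j:ℕ)+1)) : emb P j b ≤ j := by
  rw [Fin.le_def]
  exact Nat.lt_succ_iff.mp b.isLt

/-- the family of generators of the cyclic subspace -/
def fam (p : Σ b : Fin ((j:ℕ)+1), Fin (P.l (emb P j b))) : Fin n → ℂ :=
  eV (ii P i (emb P j p.1) (p.2:ℕ)) (ii_lt_n P i h1 h2 (emb_le P p.1) p.2.isLt)

/-- the corresponding indices in `Fin n` -/
def idxFin (p : Σ b : Fin ((j:ℕ)+1), Fin (P.l (emb P j b))) : Fin n :=
  ⟨ii P i (emb P j p.1) (p.2:ℕ), ii_lt_n P i h1 h2 (emb_le P p.1) p.2.isLt⟩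

include h1 h2 in
lemma idxFin_inj : Function.Injective (idxFin P i h1 h2) := by
  rintro ⟨b, a⟩ ⟨b', a'⟩ h
  have hval : ii P i (emb P j b) (a:ℕ) = ii P i (emb P j b') (a':ℕ) :=
    congrArg Fin.val h
  have hb : emb P j b = emb P j b' := by
    apply block_eq P (c := ii P i (emb P j b) (a:ℕ))
    · exact Nat.le_add_right _ _
    · exact ii_lt_S P i h1 h2 (emb_le P b) a.isLt
    · rw [hval]; exact Nat.le_add_right _ _
    · rw [hval]; exact ii_lt_S P i h1 h2 (emb_le P b') a'.isLt
  have hv : ((emb P j b : Fin P.t) : ℕ) = ((emb P j b' : Fin P.t) : ℕ) :=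
    congrArg Fin.val hb
  have hbv : b = b' := Fin.ext hv
  subst hbv
  have ha : (a:ℕ) = (a':ℕ) :=
    ii_inj P i (oi_lt P i h1 h2 (emb_le P b)) hval
  exact Sigma.ext rfl (by simp [Fin.ext_iff, ha])

include h1 h2 in
lemma fam_linearIndependent : LinearIndependent ℂ (fam P i h1 h2) := by
  have : fam P i h1 h2 = (⇑(Pi.basisFun ℂ (Fin n))) ∘ (idxFin P i h1 h2) := by
    funext p
    simp [fam, idxFin, eV, Pi.basisFun_apply]
  rw [this]
  exact (Pi.basisFun ℂ (Fin n)).linearIndependent.comp _ (idxFin_inj P i h1 h2)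

omit h1 h2 in
lemma card_idx : Fintype.card (Σ b : Fin ((j:ℕ)+1), Fin (P.l (emb P j b)))
    = P.sE ((j:ℕ)+1) := by
  rw [Fintype.card_sigma, sE_card P ((j:ℕ)+1) j.isLt]
  exact Finset.sum_congr rfl (fun b _ => by simp [emb]; exact Fintype.card_fin _)

end Aux5
section Aux6
open Matrix Polynomial

variable {n : ℕ} (P : StackPartition n) (lam : Params P) (i : Fin n) {j : Fin P.t}
    (h1 : P.mE 0 - P.m j ≤ (i : ℕ)) (h2 : (i : ℕ) < P.mE 0 - P.mE ((j : ℕ) + 1))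

/-- the candidate subspace -/
noncomputable def Wspan : Submodule ℂ (Fin n → ℂ) :=
  Submodule.span ℂ (Set.range (fam P i h1 h2))

include h1 h2 in
lemma mem_W {b : Fin P.t} (hb : b ≤ j) {a : ℕ} (ha : a < P.l b)
    (hlt : ii P i b a < n) : eV (ii P i b a) hlt ∈ Wspan P i h1 h2 := by
  have hbj1 : (b:ℕ) < (j:ℕ)+1 := by
    have := Fin.le_def.mp hb; omega
  exact Submodule.subset_span ⟨⟨⟨(b:ℕ), hbj1⟩, ⟨a, ha⟩⟩, rfl⟩

omit h2 in
lemma cyclic_inv (A : Matrix (Fin n) (Fin n) ℂ) (w v : Fin n → ℂ)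
    (hv : v ∈ cyclicSpan A w) : A *ᵥ v ∈ cyclicSpan A w := by
  have hmap : Submodule.map A.mulVecLin (cyclicSpan A w) ≤ cyclicSpan A w := by
    rw [cyclicSpan, Submodule.map_span_le]
    rintro x ⟨k, rfl⟩
    apply Submodule.subset_span
    exact ⟨k+1, by rw [Matrix.mulVecLin_apply, Matrix.mulVec_mulVec, ← pow_succ']⟩
  exact hmap ⟨v, hv, by rw [Matrix.mulVecLin_apply]⟩

include h1 h2 in
lemma step_mem {b : Fin P.t} (hb : b ≤ j) {a : ℕ} (ha : a < P.l b)
    (hlt : ii P i b a < n) :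
    cpm P lam *ᵥ eV (ii P i b a) hlt ∈ Wspan P i h1 h2 := by
  by_cases hlast : a + 1 = P.l b
  · by_cases hbj : (b:ℕ) = (j:ℕ)
    · have hbj' : b = j := Fin.ext hbj
      subst hbj'
      have hstep : cpm P lam *ᵥ eV (ii P i b a) hlt
          = ∑ q : Fin (P.l b), (-(∏ k, (X - C (lam b k))).coeff (q:ℕ)) •
              eV (ii P i b (q:ℕ)) (ii_lt_n P i h1 h2 le_rfl q.isLt) :=
        step_last_j P lam i h1 h2 hlast
      rw [hstep]
      exact Submodule.sum_mem _ (fun q _ =>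
        Submodule.smul_mem _ _ (mem_W P i h1 h2 le_rfl q.isLt _))
    · have hblt : (b:ℕ) < (j:ℕ) := lt_of_le_of_ne (Fin.le_def.mp hb) hbj
      set b' : Fin P.t := ⟨(b:ℕ)+1, by omega⟩ with hb'def
      have hbj' : b' ≤ j := by rw [Fin.le_def]; show (b:ℕ)+1 ≤ (j:ℕ); omega
      have hstep : cpm P lam *ᵥ eV (ii P i b a) hlt
          = (∑ q : Fin (P.l b), (-(∏ k, (X - C (lam b k))).coeff (q:ℕ)) •
              eV (n := n) (ii P i b (q:ℕ)) (ii_lt_n P i h1 h2 hb q.isLt))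
            + eV (ii P i b' 0) (ii_lt_n P i h1 h2 hbj' (P.l_pos b')) :=
        step_last_mid P lam i h1 h2 rfl hbj' hb hlast
      rw [hstep]
      refine Submodule.add_mem _ ?_ (mem_W P i h1 h2 hbj' (P.l_pos b') _)
      exact Submodule.sum_mem _ (fun q _ =>
        Submodule.smul_mem _ _ (mem_W P i h1 h2 hb q.isLt _))
  · have hmid : a + 1 < P.l b := by omega
    have hstep : cpm P lam *ᵥ eV (ii P i b a) hlt
        = eV (ii P i b (a+1)) (ii_lt_n P i h1 h2 hb hmid) :=
      step_mid P lam i h1 h2 hb hmid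
    rw [hstep]
    exact mem_W P i h1 h2 hb hmid _

include h1 h2 in
lemma W_invariant {v : Fin n → ℂ} (hv : v ∈ Wspan P i h1 h2) :
    cpm P lam *ᵥ v ∈ Wspan P i h1 h2 := by
  have hmap : Submodule.map (cpm P lam).mulVecLin (Wspan P i h1 h2)
      ≤ Wspan P i h1 h2 := by
    rw [Wspan, Submodule.map_span_le]
    rintro x ⟨⟨b, a⟩, rfl⟩
    rw [Matrix.mulVecLin_apply]
    exact step_mem P lam i h1 h2 (emb_le P b) a.isLt _
  exact hmap ⟨v, hv, by rw [Matrix.mulVecLin_apply]⟩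

omit h2 in
lemma ii_zero (ht : 0 < P.t) : ii P i ⟨0, ht⟩ 0 = (i:ℕ) := by
  simp [ii, S_zero, oi, mE_zero P ht]

include h1 h2 in
lemma eV_eq_single (ht : 0 < P.t) (hlt : ii P i ⟨0, ht⟩ 0 < n) :
    eV (ii P i ⟨0, ht⟩ 0) hlt = Pi.single i 1 := by
  have : (⟨ii P i ⟨0, ht⟩ 0, hlt⟩ : Fin n) = i := Fin.ext (ii_zero P i ht)
  rw [eV, this]

include h1 h2 in
lemma V_le_W : cyclicSpan (cpm P lam) (Pi.single i 1) ≤ Wspan P i h1 h2 := by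
  rw [cyclicSpan, Submodule.span_le]
  rintro x ⟨k, rfl⟩
  induction k with
  | zero =>
      show cpm P lam ^ 0 *ᵥ Pi.single i 1 ∈ (Wspan P i h1 h2 : Set (Fin n → ℂ))
      rw [pow_zero, Matrix.one_mulVec]
      have hb0 : (⟨0, j.pos⟩ : Fin P.t) ≤ j := by rw [Fin.le_def]; exact Nat.zero_le _
      rw [← eV_eq_single P i h1 h2 j.pos
        (ii_lt_n P i h1 h2 hb0 (P.l_pos _))]
      exact mem_W P i h1 h2 hb0 (P.l_pos _) _
  | succ k ih =>
      show cpm P lam ^ (k+1) *ᵥ Pi.single i 1 ∈ (Wspan P i h1 h2 : Set (Fin n → ℂ))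
      rw [pow_succ', ← Matrix.mulVec_mulVec]
      have ih' : cpm P lam ^ k *ᵥ Pi.single i 1 ∈ Wspan P i h1 h2 := ih
      exact W_invariant P lam i h1 h2 ih'

include h1 h2 in
lemma V_mem_stack : ∀ (k : ℕ) (hk : k ≤ (j:ℕ)) (a : ℕ)
    (ha : a < P.l ⟨k, lt_of_le_of_lt hk j.isLt⟩)
    (hlt : ii P i ⟨k, lt_of_le_of_lt hk j.isLt⟩ a < n),
    eV (ii P i ⟨k, lt_of_le_of_lt hk j.isLt⟩ a) hlt
      ∈ cyclicSpan (cpm P lam) (Pi.single i 1) := by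
  have base : ∀ (k : ℕ) (hk : k ≤ (j:ℕ)), (∀ (hlt0 : ii P i ⟨k, lt_of_le_of_lt hk j.isLt⟩ 0 < n),
      eV (ii P i ⟨k, lt_of_le_of_lt hk j.isLt⟩ 0) hlt0
        ∈ cyclicSpan (cpm P lam) (Pi.single i 1)) →
      ∀ (a : ℕ) (ha : a < P.l ⟨k, lt_of_le_of_lt hk j.isLt⟩)
        (hlt : ii P i ⟨k, lt_of_le_of_lt hk j.isLt⟩ a < n),
      eV (ii P i ⟨k, lt_of_le_of_lt hk j.isLt⟩ a) hlt
        ∈ cyclicSpan (cpm P lam) (Pi.single i 1) := by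
    intro k hk h0 a
    set b : Fin P.t := ⟨k, lt_of_le_of_lt hk j.isLt⟩ with hbdef
    have hbj : b ≤ j := by rw [Fin.le_def]; exact hk
    induction a with
    | zero => intro ha hlt; exact h0 hlt
    | succ a iha =>
        intro ha hlt
        have ha' : a < P.l b := by omega
        have hprev := iha ha' (ii_lt_n P i h1 h2 hbj ha')
        have hstep : cpm P lam *ᵥ eV (ii P i b a) (ii_lt_n P i h1 h2 hbj ha')
            = eV (ii P i b (a+1)) hlt := step_mid P lam i h1 h2 hbj ha
        rw [← hstep]
        exact cyclic_inv _ _ _ hprev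
  intro k
  induction k with
  | zero =>
      intro hk
      apply base 0 hk
      intro hlt0
      rw [eV_eq_single P i h1 h2 _ hlt0]
      apply Submodule.subset_span
      refine ⟨0, ?_⟩
      show cpm P lam ^ 0 *ᵥ Pi.single i 1 = _
      rw [pow_zero, Matrix.one_mulVec]
  | succ k ihk =>
      intro hk
      apply base (k+1) hk
      intro hlt0
      have hk' : k ≤ (j:ℕ) := by omega
      set b : Fin P.t := ⟨k, lt_of_le_of_lt hk' j.isLt⟩ with hbdef
      set b' : Fin P.t := ⟨k+1, lt_of_le_of_lt hk j.isLt⟩ with hb'def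
      have hbj : b ≤ j := by rw [Fin.le_def]; exact hk'
      have hbj' : b' ≤ j := by rw [Fin.le_def]; exact hk
      have hl := P.l_pos b
      have hlast : (P.l b - 1) + 1 = P.l b := by omega
      have hprev := ihk hk' (P.l b - 1) (show P.l b - 1 < P.l b by omega)
        (ii_lt_n P i h1 h2 hbj (show P.l b - 1 < P.l b by omega))
      have hstep : cpm P lam *ᵥ eV (ii P i b (P.l b - 1)) (ii_lt_n P i h1 h2 hbj (show P.l b - 1 < P.l b by omega))
          = (∑ q : Fin (P.l b), (-(∏ k, (X - C (lam b k))).coeff (q:ℕ)) •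
              eV (n := n) (ii P i b (q:ℕ)) (ii_lt_n P i h1 h2 hbj q.isLt))
            + eV (ii P i b' 0) hlt0 :=
        step_last_mid P lam i h1 h2 rfl hbj' hbj hlast
      have heq : eV (ii P i b' 0) hlt0
          = cpm P lam *ᵥ eV (ii P i b (P.l b - 1)) (ii_lt_n P i h1 h2 hbj (show P.l b - 1 < P.l b by omega))
            - (∑ q : Fin (P.l b), (-(∏ k, (X - C (lam b k))).coeff (q:ℕ)) •
              eV (n := n) (ii P i b (q:ℕ)) (ii_lt_n P i h1 h2 hbj q.isLt)) := by
        rw [hstep]; abel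
      rw [heq]
      apply Submodule.sub_mem
      · exact cyclic_inv _ _ _ hprev
      · exact Submodule.sum_mem _ (fun q _ =>
          Submodule.smul_mem _ _ (ihk hk' (q:ℕ) q.isLt _))

include h1 h2 in
lemma W_le_V : Wspan P i h1 h2 ≤ cyclicSpan (cpm P lam) (Pi.single i 1) := by
  rw [Wspan, Submodule.span_le]
  rintro x ⟨⟨b, a⟩, rfl⟩
  have hk : (b:ℕ) ≤ (j:ℕ) := Nat.lt_succ_iff.mp b.isLt
  exact V_mem_stack P lam i h1 h2 (b:ℕ) hk (a:ℕ) a.isLt _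

end Aux6


/-- For a canonical plane matrix `A ∈ 𝒫_π` and
`V_i = ℂ[A]·e_i`: if `i ∈ P_j = {m₁ − m_j + 1, ..., m₁ − m_{j+1}}` (here
`0`-indexed: `m₁ − m_j ≤ i < m₁ − m_{j+1}`), then `dim V_i = s_j`. -/
theorem statement3 (n : ℕ) (hn : 2 ≤ n) (P : StackPartition n) (lam : Params P)
    (j : Fin P.t) (i : Fin n)
    (h1 : P.mE 0 - P.m j ≤ (i : ℕ)) (h2 : (i : ℕ) < P.mE 0 - P.mE ((j : ℕ) + 1)) :
    Module.finrank ℂ (cyclicSpan (cpm P lam) (Pi.single i 1)) = P.sE ((j : ℕ) + 1) := by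
  have hVW : cyclicSpan (cpm P lam) (Pi.single i 1) = Wspan P i h1 h2 :=
    le_antisymm (V_le_W P lam i h1 h2) (W_le_V P lam i h1 h2)
  rw [hVW, Wspan, finrank_span_eq_card (fam_linearIndependent P i h1 h2), card_idx]
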